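/- For all constants ε, δ ∈ (0,1) and every constant 0 < α < δ, there exists N such that the following holds for every field F, every n ≥ N, and every m: if M ∈ F^{m×n} admits no factorization M = Q·P with Q ∈ F^{m×s}, s ≤ n/(1−ε), each row of Q having at most n^δ nonzero entries, and P ∈ F^{s×n}, then M contains a submatrix M' ∈ F^{m×n'}, formed by n' ≥ n^α of the columns of M, which is (m, n', ε·n', n^α)-row rigid. -/

import Mathlib

open Submodule Set Matrix

lemma exists_col_factorization {F : Type} [Field F] {m n : ℕ} (N : Matrix (Fin m) (Fin n) F) :
    ∃ (d : ℕ) (g : Fin d → Fin n) (C : Matrix (Fin d) (Fin n) F),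
      d ≤ N.rank ∧ N = (N.submatrix id g) * C := by
  classical
  obtain ⟨b, hbsub, hspan, hli⟩ := exists_linearIndependent F (Set.range Nᵀ)
  have hbfin : b.Finite := (Set.finite_range Nᵀ).subset hbsub
  haveI := hbfin.fintype
  let d := Fintype.card b
  let e : Fin d ≃ b := (Fintype.equivFin b).symm
  have hg : ∀ i : Fin d, ∃ j, Nᵀ j = (e i : Fin m → F) := fun i => hbsub (e i).2
  choose g hgspec using hg
  have hrange : Set.range (fun i => Nᵀ (g i)) = b := by
    ext x
    constructor
    · rintro ⟨i, rfl⟩; simp only []; rw [hgspec]; exact (e i).2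
    · intro hx; exact ⟨e.symm ⟨x, hx⟩, by simp only []; rw [hgspec]; simp [e]⟩
  have hrank : d ≤ N.rank := by
    rw [Matrix.rank_eq_finrank_span_cols, show N.col = Nᵀ from rfl, ← hspan]
    exact le_of_eq (by rw [finrank_span_set_eq_card hli, Set.toFinset_card])
  have hcol : ∀ j, ∃ c : Fin d → F, ∑ i, c i • Nᵀ (g i) = Nᵀ j := by
    intro j
    rw [← mem_span_range_iff_exists_fun]
    rw [hrange, hspan]
    exact Submodule.subset_span ⟨j, rfl⟩
  choose c hc using hcol
  refine ⟨d, g, fun i j => c j i, hrank, ?_⟩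
  ext i j
  have h := congrFun (hc j) i
  simp only [Finset.sum_apply, Pi.smul_apply, smul_eq_mul, Matrix.transpose_apply] at h
  change N i j = ∑ k, (N.submatrix id g) i k * c j k
  rw [← h]
  exact Finset.sum_congr rfl fun k _ => mul_comm _ _

/-- `M` is `(m,n,r,t)`-row rigid (with real parameters): every matrix differing from `M`
in at most `t` entries in each row has rank at least `r`. -/
def RowRigidR {F : Type*} [Field F] {m n : ℕ} (r t : ℝ)
    (M : Matrix (Fin m) (Fin n) F) : Prop :=
  ∀ N : Matrix (Fin m) (Fin n) F,
    (∀ i, ({j | M i j ≠ N i j}.ncard : ℝ) ≤ t) → r ≤ (N.rank : ℝ)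

lemma key_factor {F : Type} [Field F] {m n : ℕ} (ε t : ℝ) (hε0 : 0 < ε) (hε1 : ε < 1)
    (ht1 : 1 ≤ t) (M : Matrix (Fin m) (Fin n) F)
    (hnr : ∀ (n' : ℕ) (f : Fin n' → Fin n), t ≤ (n' : ℝ) →
      ¬ RowRigidR (ε * n') t (M.submatrix id f)) :
    ∀ (n' : ℕ) (f : Fin n' → Fin n),
      ∃ (s k : ℕ) (Q : Matrix (Fin m) (Fin s) F) (P : Matrix (Fin s) (Fin n') F),
        M.submatrix id f = Q * P ∧ ((s : ℝ) ≤ (n' : ℝ) / (1 - ε)) ∧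
        (∀ i, ({j | Q i j ≠ 0}.ncard : ℝ) ≤ t * k + t) ∧
        (k = 0 ∨ t * (1/ε) ^ (k - 1) ≤ (n' : ℝ)) := by
  classical
  have h1ε : (0:ℝ) < 1 - ε := by linarith
  intro n'
  induction n' using Nat.strong_induction_on with
  | _ n' IH =>
  intro f
  by_cases hbig : t ≤ (n' : ℝ)
  case neg =>
    refine ⟨n', 0, M.submatrix id f, 1, (Matrix.mul_one _).symm, ?_, ?_, Or.inl rfl⟩
    · rw [le_div_iff₀ h1ε]
      nlinarith [Nat.cast_nonneg (α := ℝ) n']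
    · intro i
      have hsub : {j | (M.submatrix id f) i j ≠ 0}.ncard ≤ n' := by
        have := Set.ncard_le_ncard (Set.subset_univ {j | (M.submatrix id f) i j ≠ 0})
          (Set.finite_univ)
        simpa [Set.ncard_univ] using this
      have : ((n' : ℝ)) ≤ t := le_of_lt (lt_of_not_ge hbig)
      push_cast
      calc ({j | (M.submatrix id f) i j ≠ 0}.ncard : ℝ) ≤ (n' : ℝ) := by exact_mod_cast hsub
        _ ≤ t := this
        _ = t * 0 + t := by ring
  case pos =>
    have hn'pos : (0:ℝ) < (n' : ℝ) := lt_of_lt_of_le zero_lt_one (le_trans ht1 hbig)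
    have hnrig := hnr n' f hbig
    rw [RowRigidR] at hnrig
    push_neg at hnrig
    obtain ⟨N, hNs, hNr⟩ := hnrig
    obtain ⟨d, g, C, hdr, hNC⟩ := exists_col_factorization N
    have hdlt : (d : ℝ) < ε * (n' : ℝ) :=
      lt_of_le_of_lt (by exact_mod_cast hdr) hNr
    have hdn : d < n' := by
      have : (d : ℝ) < (n' : ℝ) := lt_of_lt_of_le hdlt (by nlinarith)
      exact_mod_cast this
    obtain ⟨s'', k'', Q'', P'', hfac, hw, hsp, hk⟩ := IH d hdn (f ∘ g)
    set E : Matrix (Fin m) (Fin n') F := M.submatrix id f - N with hE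
    let J : Matrix (Fin n') (Fin d) F := fun j i => if g i = j then 1 else 0
    have hEJ : E * J = E.submatrix id g := by
      ext i k
      rw [Matrix.mul_apply]
      simp only [Matrix.mul_apply, J, mul_ite, mul_one, mul_zero, Matrix.submatrix_apply, id]
      rw [Finset.sum_ite_eq]
      simp
    have hNg : N.submatrix id g = Q'' * P'' - E.submatrix id g := by
      have hN' : N = M.submatrix id f - E := by simp [hE]
      rw [hN']
      ext i k
      simp only [Matrix.sub_apply, Matrix.submatrix_apply, id]
      rw [show M i (f (g k)) = (Q'' * P'') i k from by
        rw [← hfac]; simp [Matrix.submatrix_apply]]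
    refine ⟨s'' + n', k'' + 1,
      (Matrix.fromCols Q'' E).submatrix id finSumFinEquiv.symm,
      (Matrix.fromRows (P'' * C) (1 - J * C)).submatrix finSumFinEquiv.symm id,
      ?_, ?_, ?_, ?_⟩
    · rw [Matrix.submatrix_mul_equiv, Matrix.submatrix_id_id,
        Matrix.fromCols_mul_fromRows]
      calc M.submatrix id f = N + E := by simp [hE]
        _ = (N.submatrix id g) * C + E := by rw [← hNC]
        _ = (Q'' * P'' - E.submatrix id g) * C + E := by rw [hNg]
        _ = Q'' * (P'' * C) + E * (1 - J * C) := by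
            rw [Matrix.sub_mul, Matrix.mul_sub, Matrix.mul_one, ← Matrix.mul_assoc E J C, hEJ, Matrix.mul_assoc]
            abel
    · have hw' : (s'' : ℝ) * (1 - ε) ≤ d := (le_div_iff₀ h1ε).mp hw
      rw [le_div_iff₀ h1ε]
      push_cast
      nlinarith
    · intro i
      have himg : {x | (Matrix.fromCols Q'' E).submatrix id (⇑finSumFinEquiv.symm) i x ≠ 0}
          = finSumFinEquiv '' {y | Matrix.fromCols Q'' E i y ≠ 0} := by
        rw [Equiv.image_eq_preimage_symm]
        rfl
      have hcup : {y | Matrix.fromCols Q'' E i y ≠ 0}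
          = Sum.inl '' {j | Q'' i j ≠ 0} ∪ Sum.inr '' {j | E i j ≠ 0} := by
        ext y
        cases y <;> simp [Matrix.fromCols]
      have hEcard : ({j | E i j ≠ 0}.ncard : ℝ) ≤ t := by
        have : {j | E i j ≠ 0} = {j | (M.submatrix id f) i j ≠ N i j} := by
          ext j; simp [hE, sub_ne_zero]
        rw [this]; exact hNs i
      rw [himg, Set.ncard_image_of_injective _ finSumFinEquiv.injective, hcup]
      calc ((Sum.inl '' {j | Q'' i j ≠ 0} ∪ Sum.inr '' {j | E i j ≠ 0}).ncard : ℝ)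
          ≤ ((Sum.inl '' {j | Q'' i j ≠ 0}).ncard : ℝ)
            + ((Sum.inr '' {j | E i j ≠ 0}).ncard : ℝ) := by
            exact_mod_cast Set.ncard_union_le _ _
        _ = ({j | Q'' i j ≠ 0}.ncard : ℝ) + ({j | E i j ≠ 0}.ncard : ℝ) := by
            rw [Set.ncard_image_of_injective _ Sum.inl_injective,
              Set.ncard_image_of_injective _ Sum.inr_injective]
        _ ≤ (t * k'' + t) + t := add_le_add (hsp i) hEcard
        _ = t * (k'' + 1) + t := by ring
        _ = t * ((k'' + 1 : ℕ) : ℝ) + t := by push_cast; ring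
    · refine Or.inr ?_
      have hksimp : (k'' + 1) - 1 = k'' := rfl
      rw [hksimp]
      rcases Nat.eq_zero_or_pos k'' with hk0 | hk1
      · subst hk0; simpa using hbig
      · have hk' : t * (1/ε) ^ (k'' - 1) ≤ (d : ℝ) := by
          rcases hk with h | h
          · omega
          · exact h
        have hpow : t * (1/ε) ^ k'' = t * (1/ε) ^ (k'' - 1) * (1/ε) := by
          rw [mul_assoc, ← pow_succ, Nat.sub_add_cancel hk1]
        rw [hpow]
        have h2 : t * (1/ε) ^ (k'' - 1) * (1/ε) ≤ (d : ℝ) * (1/ε) := by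
          apply mul_le_mul_of_nonneg_right hk'
          positivity
        refine le_trans h2 ?_
        rw [mul_one_div, div_le_iff₀ hε0]
        nlinarith

/-- polynomial lower bounds: for all constants `ε, δ ∈ (0,1)` and
`0 < α < δ` there exists `N` such that for every field `F`, every `n ≥ N` and every `m`:
if `M ∈ F^{m×n}` admits no factorization `M = Q * P` with `s ≤ n/(1-ε)` and each row of
`Q` having at most `n^δ` nonzero entries, then `M` contains a submatrix on `n' ≥ n^α`
of its columns which is `(m, n', ε·n', n^α)`-row rigid. -/
theorem polynomial_lds_lower_bound_gives_rigid_submatrix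
    (ε δ α : ℝ) (hε0 : 0 < ε) (hε1 : ε < 1) (hδ0 : 0 < δ) (hδ1 : δ < 1)
    (hα0 : 0 < α) (hαδ : α < δ) :
    ∃ N : ℕ, ∀ (F : Type) (_ : Field F) (n : ℕ), N ≤ n → ∀ (m : ℕ),
      ∀ M : Matrix (Fin m) (Fin n) F,
        (¬ ∃ (s : ℕ) (Q : Matrix (Fin m) (Fin s) F) (P : Matrix (Fin s) (Fin n) F),
          (s : ℝ) ≤ (n : ℝ) / (1 - ε) ∧
          (∀ i, ({j | Q i j ≠ 0}.ncard : ℝ) ≤ (n : ℝ) ^ δ) ∧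
          M = Q * P) →
        ∃ (n' : ℕ) (f : Fin n' → Fin n),
          (n : ℝ) ^ α ≤ (n' : ℝ) ∧
          RowRigidR (ε * n') ((n : ℝ) ^ α) (M.submatrix id f) := by
  have hδα : 0 < δ - α := by linarith
  have hlogε : 0 < Real.log (1/ε) := Real.log_pos (by rw [lt_div_iff₀ hε0]; linarith)
  set c : ℝ := (1 - α) / Real.log (1/ε) with hc
  have hc0 : 0 ≤ c := div_nonneg (by linarith) hlogε.le
  have h1 : ∀ᶠ x : ℝ in Filter.atTop, c * Real.log x ≤ (1/2) * x ^ (δ - α) := by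
    have hb := (isLittleO_log_rpow_atTop hδα).bound
      (show (0:ℝ) < 1/(2*(c+1)) by positivity)
    filter_upwards [hb, Filter.eventually_ge_atTop (1:ℝ)] with x hx hx1
    have hlog : 0 ≤ Real.log x := Real.log_nonneg hx1
    have hpow : 0 ≤ x ^ (δ - α) := Real.rpow_nonneg (by linarith) _
    rw [Real.norm_eq_abs, Real.norm_eq_abs, abs_of_nonneg hlog, abs_of_nonneg hpow] at hx
    calc c * Real.log x ≤ (c+1) * Real.log x := by nlinarith
      _ ≤ (c+1) * (1/(2*(c+1)) * x ^ (δ - α)) := by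
          apply mul_le_mul_of_nonneg_left hx (by positivity)
      _ = (1/2) * x ^ (δ - α) := by field_simp
  have h2 : ∀ᶠ x : ℝ in Filter.atTop, (4:ℝ) ≤ x ^ (δ - α) :=
    (tendsto_rpow_atTop hδα).eventually_ge_atTop 4
  obtain ⟨x0, hx0⟩ := Filter.eventually_atTop.mp (h1.and h2)
  refine ⟨⌈x0⌉₊ + 1, ?_⟩
  intro F _ n hn m M hfac
  have hn1 : 1 ≤ n := le_trans (Nat.le_add_left 1 _) hn
  have hnx : x0 ≤ (n : ℝ) := by
    refine le_trans (Nat.le_ceil x0) ?_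
    exact_mod_cast Nat.le_of_succ_le hn
  obtain ⟨hA, hB⟩ := hx0 (n : ℝ) hnx
  have hnpos : (0:ℝ) < (n : ℝ) := by exact_mod_cast hn1
  by_contra hcon
  push_neg at hcon
  set t : ℝ := (n : ℝ) ^ α with htdef
  have ht1 : 1 ≤ t := Real.one_le_rpow (by exact_mod_cast hn1) hα0.le
  have hnr : ∀ (n' : ℕ) (f : Fin n' → Fin n), t ≤ (n' : ℝ) →
      ¬ RowRigidR (ε * n') t (M.submatrix id f) := fun n' f h => hcon n' f h
  obtain ⟨s, k, Q, Pm, hQP, hwidth, hsparse, hk⟩ := key_factor ε t hε0 hε1 ht1 M hnr n id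
  apply hfac
  refine ⟨s, Q, Pm, hwidth, ?_, by rw [← Matrix.submatrix_id_id M]; exact hQP⟩
  intro i
  refine le_trans (hsparse i) ?_
  have hkey : t * (k : ℝ) + t ≤ (n : ℝ) ^ δ := by
    have hmono : t * ((k : ℝ) + 1) ≤ (n : ℝ) ^ δ → t * (k : ℝ) + t ≤ (n : ℝ) ^ δ := by
      intro h; nlinarith
    apply hmono
    rcases hk with hk0 | hkb
    · subst hk0
      simpa using Real.rpow_le_rpow_of_exponent_le (by exact_mod_cast hn1) (le_of_lt hαδ)
    · -- bound k via logs
      have hpowpos : (0:ℝ) < (1/ε) ^ (k - 1) := by positivity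
      have hdiv : ((1/ε) : ℝ) ^ (k - 1) ≤ (n : ℝ) / t := by
        rw [le_div_iff₀ (by linarith : (0:ℝ) < t)]
        calc ((1/ε) : ℝ) ^ (k - 1) * t = t * (1/ε) ^ (k - 1) := by ring
          _ ≤ (n : ℝ) := hkb
      have hnt : (n : ℝ) / t = (n : ℝ) ^ (1 - α) := by
        rw [htdef, Real.rpow_sub hnpos, Real.rpow_one]
      rw [hnt] at hdiv
      have hlogle : ((k - 1 : ℕ) : ℝ) * Real.log (1/ε) ≤ (1 - α) * Real.log (n : ℝ) := by
        have := Real.log_le_log hpowpos hdiv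
        rwa [Real.log_pow, Real.log_rpow hnpos] at this
      have hkc : ((k - 1 : ℕ) : ℝ) ≤ c * Real.log (n : ℝ) := by
        rw [hc, div_mul_eq_mul_div, le_div_iff₀ hlogε]
        linarith
      have hkk : ((k : ℝ) + 1) ≤ ((k - 1 : ℕ) : ℝ) + 2 := by
        have : k ≤ (k - 1) + 1 := by omega
        have h' : (k : ℝ) ≤ ((k - 1 : ℕ) : ℝ) + 1 := by exact_mod_cast this
        linarith
      have hfinal : ((k : ℝ) + 1) ≤ (n : ℝ) ^ (δ - α) := by
        calc ((k : ℝ) + 1) ≤ ((k - 1 : ℕ) : ℝ) + 2 := hkk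
          _ ≤ c * Real.log (n : ℝ) + 2 := by linarith
          _ ≤ (1/2) * (n : ℝ) ^ (δ - α) + (1/2) * (n : ℝ) ^ (δ - α) := by linarith
          _ = (n : ℝ) ^ (δ - α) := by ring
      calc t * ((k : ℝ) + 1) ≤ t * (n : ℝ) ^ (δ - α) := by
            apply mul_le_mul_of_nonneg_left hfinal (by linarith)
        _ = (n : ℝ) ^ δ := by
            rw [htdef, ← Real.rpow_add hnpos]
            ring_nf
  exact hkey
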